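/- Suppose char F is odd. Then every principal self-dual 2-quasi-cyclic code of length 2n over F is a consta-dihedral code. In particular, every self-dual 2-quasi-cyclic code of the form FH·(1, a) with a ∈ FH (i.e., every self-dual double circulant code) is a consta-dihedral code. -/

import Mathlib

noncomputable section

/-- The cyclic group of order `n`, written multiplicatively. -/
abbrev Zn (n : ℕ) := Multiplicative (ZMod n)

/-- The group algebra `FH` of the cyclic group of order `n` over `F`. -/
abbrev FH (F : Type*) [Field F] (n : ℕ) := MonoidAlgebra F (Zn n)

variable {F : Type*} [Field F] [Fintype F] {n : ℕ} [NeZero n]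

/-- The "bar" map of the group algebra, induced by `x ↦ x⁻¹`. -/
def bar (a : FH F n) : FH F n :=
  MonoidAlgebra.ofCoeff (Finsupp.equivMapDomain (Equiv.inv (Zn n)) a.coeff)

/-- The inner product on `FH`: `⟨a, b⟩ = ∑ a_g * b_g`. -/
def innerFH (a b : FH F n) : F := ∑ g : Zn n, a.coeff g * b.coeff g

/-- The inner product on `FH × FH`. -/
def innerFH2 (a b : FH F n × FH F n) : F := innerFH a.1 b.1 + innerFH a.2 b.2

/-- `Ĉ₁₂ = {(c, c·g) : c ∈ C12}` as an `FH`-submodule of `FH × FH`. -/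
def hatSub (C12 : Ideal (FH F n)) (g : FH F n) : Submodule (FH F n) (FH F n × FH F n) :=
  Submodule.map (LinearMap.prod LinearMap.id (LinearMap.mulRight (FH F n) g)) C12

/-- A 2-quasi-cyclic code (an `FH`-submodule of `FH × FH`) is self-dual if it
equals its orthogonal complement. -/
def IsSelfDual (C : Submodule (FH F n) (FH F n × FH F n)) : Prop :=
  (C : Set (FH F n × FH F n)) = {v | ∀ c ∈ C, innerFH2 v c = 0}

/-- A 2-quasi-cyclic code is a dihedral code iff it is invariant under
`(a, a') ↦ (ā', ā)` (left multiplication by `y` in the dihedral group algebra). -/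
def IsDihedral (C : Submodule (FH F n) (FH F n × FH F n)) : Prop :=
  ∀ p ∈ C, (bar p.2, bar p.1) ∈ C

/-- A 2-quasi-cyclic code is a consta-dihedral code iff it is invariant under
`(a, a') ↦ (−ā', ā)` (left multiplication by `ỹ` in the consta-dihedral algebra). -/
def IsConstaDihedral (C : Submodule (FH F n) (FH F n × FH F n)) : Prop :=
  ∀ p ∈ C, (-(bar p.2), bar p.1) ∈ C

set_option linter.unusedSectionVars false in
lemma bar_apply' (u : FH F n) (g : Zn n) : (bar u).coeff g = u.coeff g⁻¹ := by
  simp [bar]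

set_option linter.unusedSectionVars false in
lemma innerFH_bar' (u w : FH F n) : innerFH (bar u) w = (u * w).coeff 1 := by
  rw [innerFH, MonoidAlgebra.mul_apply]
  rw [Finsupp.sum_fintype _ _ (by intro g; simp)]
  have : ∀ g : Zn n, (Finsupp.sum w.coeff fun h b => if g * h = 1 then u.coeff g * b else 0)
      = u.coeff g * w.coeff g⁻¹ := by
    intro g
    rw [Finsupp.sum_fintype _ _ (by intro h; simp)]
    have : ∀ h : Zn n, (if g * h = 1 then u.coeff g * w.coeff h else 0)
        = if h = g⁻¹ then u.coeff g * w.coeff h else 0 := by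
      intro h; congr 1; simp [eq_comm, eq_inv_iff_mul_eq_one, mul_comm]
    simp only [this, Finset.sum_ite_eq' Finset.univ]
    simp
  simp only [this]
  exact Fintype.sum_equiv (Equiv.inv (Zn n)) _ _ (fun g => by simp [bar_apply'])

set_option linter.unusedSectionVars false in
lemma innerFH_neg' (u w : FH F n) : innerFH (-u) w = -innerFH u w := by
  rw [innerFH, innerFH, ← Finset.sum_neg_distrib]
  exact Finset.sum_congr rfl (fun g _ => by rw [MonoidAlgebra.coeff_neg, Finsupp.neg_apply, neg_mul])

/-- (char F odd.) Every principal self-dual 2-quasi-cyclic code is a consta-dihedral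
code; in particular every self-dual double circulant code `FH·(1, a)` is
consta-dihedral. -/
theorem principal_self_dual_is_consta_dihedral_odd_char (F : Type*) [Field F] [Fintype F]
    (n : ℕ) [NeZero n]
    (hn : 1 < n) (hcop : Nat.Coprime n (Fintype.card F))
    (hchar : ringChar F ≠ 2) :
    (∀ C : Submodule (FH F n) (FH F n × FH F n), IsSelfDual C →
      (∃ v : FH F n × FH F n, C = Submodule.span (FH F n) {v}) → IsConstaDihedral C) ∧
    (∀ (a : FH F n) (C : Submodule (FH F n) (FH F n × FH F n)), IsSelfDual C →
      C = Submodule.span (FH F n) {((1 : FH F n), a)} → IsConstaDihedral C) := by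
  have main : ∀ C : Submodule (FH F n) (FH F n × FH F n), IsSelfDual C →
      (∃ v : FH F n × FH F n, C = Submodule.span (FH F n) {v}) → IsConstaDihedral C := by
    rintro C hsd ⟨v, rfl⟩ p hp
    rw [Submodule.mem_span_singleton] at hp
    obtain ⟨r, hr⟩ := hp
    have hmem : (-(bar p.2), bar p.1) ∈
        {w : FH F n × FH F n | ∀ c ∈ Submodule.span (FH F n) {v}, innerFH2 w c = 0} := by
      intro q hq
      rw [Submodule.mem_span_singleton] at hq
      obtain ⟨s, hs⟩ := hq
      have hp1 : p.1 = r * v.1 := by rw [← hr]; rfl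
      have hp2 : p.2 = r * v.2 := by rw [← hr]; rfl
      have hq1 : q.1 = s * v.1 := by rw [← hs]; rfl
      have hq2 : q.2 = s * v.2 := by rw [← hs]; rfl
      show innerFH (-(bar p.2)) q.1 + innerFH (bar p.1) q.2 = 0
      rw [innerFH_neg', innerFH_bar', innerFH_bar', hp1, hp2, hq1, hq2]
      rw [show r * v.2 * (s * v.1) = r * v.1 * (s * v.2) by ring]
      ring
    have := hsd ▸ hmem
    exact this
  exact ⟨main, fun a C h1 h2 => main C h1 ⟨((1 : FH F n), a), h2⟩⟩
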